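/- Let ρ_{AB} be a quantum state and M an operator with M†M ≤ Id satisfying Tr(M† M ρ_{AB}) (equivalently Tr(M ρ_{AB} M†)) taking some positive value p. Let ρ̂_{AB} = (M ρ_{AB} M†)/p, where M acts only on system B. Then D_max(ρ̂_A ‖ ρ_A) ≤ log(1/p). -/

import Mathlib

open Matrix Kronecker
open scoped Classical ComplexOrder

noncomputable section

abbrev Str (k : ℕ) := Fin k → Bool

def IsDensity {A : Type*} [Fintype A] (ρ : Matrix A A ℂ) : Prop :=
  ρ.PosSemidef ∧ ρ.trace = 1

def IsPure {A : Type*} (ρ : Matrix A A ℂ) : Prop :=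
  ∃ v : A → ℂ, ρ = Matrix.vecMulVec v (star v)

def posSemidefSqrt {A : Type*} [Fintype A] [DecidableEq A] {M : Matrix A A ℂ}
    (hM : M.PosSemidef) : Matrix A A ℂ :=
  hM.1.eigenvectorUnitary.1 * Matrix.diagonal (((↑) : ℝ → ℂ) ∘ (Real.sqrt ·) ∘ hM.1.eigenvalues) *
    (star hM.1.eigenvectorUnitary : Matrix A A ℂ)

def traceNorm {A : Type*} [Fintype A] [DecidableEq A] (M : Matrix A A ℂ) : ℝ :=
  (posSemidefSqrt (Matrix.posSemidef_conjTranspose_mul_self M)).trace.re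

def msqrt {A : Type*} [Fintype A] [DecidableEq A] (M : Matrix A A ℂ) : Matrix A A ℂ :=
  if h : M.PosSemidef then posSemidefSqrt h else 0

def fidelity {A : Type*} [Fintype A] [DecidableEq A] (ρ σ : Matrix A A ℂ) : ℝ :=
  traceNorm (msqrt ρ * msqrt σ)

def Bures {A : Type*} [Fintype A] [DecidableEq A] (ρ σ : Matrix A A ℂ) : ℝ :=
  Real.sqrt (1 - fidelity ρ σ)

def mUniform (A : Type*) [Fintype A] [DecidableEq A] : Matrix A A ℂ :=
  ((Fintype.card A : ℂ))⁻¹ • (1 : Matrix A A ℂ)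

def dmaxLE {A : Type*} [Fintype A] (ρ σ : Matrix A A ℂ) (c : ℝ) : Prop :=
  (((2:ℝ) ^ c) • σ - ρ).PosSemidef

def Dmax {A : Type*} [Fintype A] (ρ σ : Matrix A A ℂ) : ℝ :=
  sInf {c : ℝ | dmaxLE ρ σ c}

def ptraceRight {A B : Type*} [Fintype A] [Fintype B]
    (ρ : Matrix (A × B) (A × B) ℂ) : Matrix A A ℂ :=
  Matrix.of fun a a' => ∑ b, ρ (a, b) (a', b)

def ptraceLeft {A B : Type*} [Fintype A] [Fintype B]
    (ρ : Matrix (A × B) (A × B) ℂ) : Matrix B B ℂ :=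
  Matrix.of fun b b' => ∑ a, ρ (a, b) (a, b')

def condHmin {A B : Type*} [Fintype A] [Fintype B] [DecidableEq A] [DecidableEq B]
    (ρ : Matrix (A × B) (A × B) ℂ) : ℝ :=
  sSup {x : ℝ | ∃ σ : Matrix B B ℂ, IsDensity σ ∧ x = - Dmax ρ ((1 : Matrix A A ℂ) ⊗ₖ σ)}

def condHminTilde {A B : Type*} [Fintype A] [Fintype B] [DecidableEq A] [DecidableEq B]
    (ρ : Matrix (A × B) (A × B) ℂ) : ℝ :=
  - Dmax ρ ((1 : Matrix A A ℂ) ⊗ₖ ptraceLeft ρ)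

lemma posSemidef_real_smul {n : Type*} [Fintype n] {M : Matrix n n ℂ}
    (hM : M.PosSemidef) {r : ℝ} (hr : 0 ≤ r) : (r • M).PosSemidef := by
  refine PosSemidef.of_dotProduct_mulVec_nonneg ?_ ?_
  · show (r • M)ᴴ = r • M
    rw [conjTranspose_smul_non_comm, hM.1]
    · simp
    · intros; simp [mul_comm]
  · intro x
    have : star x ⬝ᵥ (r • M) *ᵥ x = (r : ℂ) * (star x ⬝ᵥ M *ᵥ x) := by
      simp only [dotProduct, mulVec, Finset.mul_sum, Pi.smul_apply, Matrix.smul_apply,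
        Complex.real_smul, smul_eq_mul]
      refine Finset.sum_congr rfl fun i _ => ?_
      exact Finset.sum_congr rfl fun j _ => by ring
    rw [this]
    exact mul_nonneg (by exact_mod_cast Complex.zero_le_real.mpr hr) (hM.dotProduct_mulVec_nonneg x)

lemma ptraceRight_posSemidef {A B : Type*} [Fintype A] [Fintype B]
    {σ : Matrix (A × B) (A × B) ℂ} (hσ : σ.PosSemidef) :
    (ptraceRight σ).PosSemidef := by
  refine PosSemidef.of_dotProduct_mulVec_nonneg ?_ ?_
  · ext a a'
    simp only [ptraceRight, conjTranspose_apply, of_apply, star_sum]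
    exact Finset.sum_congr rfl fun b _ => hσ.1.apply (a, b) (a', b)
  · intro x
    have h : star x ⬝ᵥ (ptraceRight σ) *ᵥ x
        = ∑ b : B, star (fun q : A × B => if q.2 = b then x q.1 else 0) ⬝ᵥ
            σ *ᵥ (fun q : A × B => if q.2 = b then x q.1 else 0) := by
      simp only [dotProduct, mulVec, ptraceRight, of_apply, Pi.star_apply,
        Fintype.sum_prod_type, apply_ite (star : ℂ → ℂ), star_zero, ite_mul, mul_ite,
        mul_zero, zero_mul, Finset.sum_ite_eq', Finset.mem_univ, if_true, Finset.mul_sum,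
        Finset.sum_mul]
      conv_rhs =>
        enter [2, x1, 2, x2]
        rw [Finset.sum_comm]
      simp only [Finset.sum_ite_eq', Finset.mem_univ, if_true]
      conv_lhs =>
        enter [2, a]
        rw [Finset.sum_comm]
      rw [Finset.sum_comm]
    rw [h]
    exact Finset.sum_nonneg fun b _ => hσ.dotProduct_mulVec_nonneg _

lemma ptraceRight_conj {A B : Type*} [Fintype A] [Fintype B] [DecidableEq A]
    (ρ : Matrix (A × B) (A × B) ℂ) (N : Matrix B B ℂ) (a a' : A) :
    ptraceRight (((1 : Matrix A A ℂ) ⊗ₖ N) * ρ * ((1 : Matrix A A ℂ) ⊗ₖ Nᴴ)) a a'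
      = ∑ c, ∑ c', ρ (a, c) (a', c') * (Nᴴ * N) c' c := by
  simp only [ptraceRight, of_apply, mul_apply, kroneckerMap_apply, Fintype.sum_prod_type,
    one_apply, ite_mul, one_mul, zero_mul, mul_ite, mul_zero, mul_one,
    Finset.sum_ite_irrel, Finset.sum_const_zero,
    Finset.sum_ite_eq, Finset.sum_ite_eq', Finset.mem_univ, if_true, conjTranspose_apply,
    Finset.mul_sum, Finset.sum_mul]
  rw [Finset.sum_comm]
  conv_lhs =>
    enter [2, x1]
    rw [Finset.sum_comm]
  rw [Finset.sum_comm]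
  refine Finset.sum_congr rfl fun c _ => Finset.sum_congr rfl fun c' _ =>
    Finset.sum_congr rfl fun i _ => by ring

lemma ptraceRight_real_smul {A B : Type*} [Fintype A] [Fintype B]
    (ρ : Matrix (A × B) (A × B) ℂ) (r : ℝ) :
    ptraceRight (r • ρ) = r • ptraceRight ρ := by
  ext a a'
  simp [ptraceRight, Finset.smul_sum]

/-- For a measurement operator `M` acting only on system `B` with success
probability `p`, the conditioned marginal on `A` satisfies `D_max(ρ̂_A ‖ ρ_A) ≤ log(1/p)`. -/
theorem dmax_after_measurement {A B : Type*} [Fintype A] [Fintype B]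
    [DecidableEq A] [DecidableEq B]
    (ρ : Matrix (A × B) (A × B) ℂ) (hρ : IsDensity ρ)
    (M : Matrix B B ℂ) (hM : ((1 : Matrix B B ℂ) - Mᴴ * M).PosSemidef)
    (p : ℝ) (hp : 0 < p)
    (hptr : (((1 : Matrix A A ℂ) ⊗ₖ M) * ρ * ((1 : Matrix A A ℂ) ⊗ₖ Mᴴ)).trace = (p : ℂ)) :
    dmaxLE
      (ptraceRight (p⁻¹ • (((1 : Matrix A A ℂ) ⊗ₖ M) * ρ * ((1 : Matrix A A ℂ) ⊗ₖ Mᴴ))))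
      (ptraceRight ρ) (Real.logb 2 (1 / p)) := by
  have hc : (2:ℝ) ^ Real.logb 2 (1 / p) = p⁻¹ := by
    rw [Real.rpow_logb (by norm_num) (by norm_num) (by positivity), one_div]
  obtain ⟨S, hSsa, -, hSsq⟩ := by
    open scoped MatrixOrder in
    exact CFC.exists_sqrt_of_isSelfAdjoint_of_quasispectrumRestricts hM.isHermitian
      (QuasispectrumRestricts.nnreal_of_nonneg hM.nonneg)
  have hSherm : Sᴴ = S := hSsa
  have hSS : Sᴴ * S = 1 - Mᴴ * M := by rw [hSherm, hSsq]
  have hkconj : (1 : Matrix A A ℂ) ⊗ₖ Sᴴ = ((1 : Matrix A A ℂ) ⊗ₖ S)ᴴ := by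
    ext ⟨a, b⟩ ⟨a', b'⟩
    simp [conjTranspose_apply, kroneckerMap_apply, one_apply, apply_ite (star : ℂ → ℂ),
      eq_comm]
  have hkey : ((2:ℝ) ^ Real.logb 2 (1 / p)) • ptraceRight ρ
      - ptraceRight (p⁻¹ • (((1 : Matrix A A ℂ) ⊗ₖ M) * ρ * ((1 : Matrix A A ℂ) ⊗ₖ Mᴴ)))
      = p⁻¹ • ptraceRight (((1 : Matrix A A ℂ) ⊗ₖ S) * ρ * ((1 : Matrix A A ℂ) ⊗ₖ Sᴴ)) := by
    rw [hc, ptraceRight_real_smul, ← smul_sub]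
    congr 1
    ext a a'
    rw [Matrix.sub_apply, ptraceRight_conj, ptraceRight_conj, hSS]
    simp only [ptraceRight, of_apply, Matrix.sub_apply, one_apply, mul_sub, mul_ite, mul_one,
      mul_zero, Finset.sum_sub_distrib, Finset.sum_ite_eq', Finset.mem_univ, if_true]
  show (((2:ℝ) ^ Real.logb 2 (1 / p)) • ptraceRight ρ - _).PosSemidef
  rw [hkey, hkconj]
  exact posSemidef_real_smul
    (ptraceRight_posSemidef (hρ.1.mul_mul_conjTranspose_same _)) (by positivity)
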